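/- Reverse comparison for α ∈ (0, 1/2): with J_α(u) = (1/(α(α−1)))((1 − ((1−α)/(4α)) u)_+^α − 1) and J_α^♭(u) = (1/(α(α−1)))((1 − ((1−α)^2/(2α)) u)_+^{α/(2(1−α))} − 1), one has J_α(u) ≤ J_α^♭(u) for every u ≥ 0. -/
import Mathlib


/-- For `α ∈ (0, 1/2)`, the majorized loss `J_α` is dominated by the improved
majorized loss `J_α^♭` (with the `α < 1/2` coefficients). -/
theorem loss_le_improved_loss (α : ℝ) (hα : α ∈ Set.Ioo (0:ℝ) (1/2))
    (u : ℝ) (hu : 0 ≤ u) :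
    (1 / (α * (α - 1))) * ((max (1 - (1 - α) / (4 * α) * u) 0) ^ α - 1)
      ≤ (1 / (α * (α - 1))) *
          ((max (1 - (1 - α) ^ 2 / (2 * α) * u) 0) ^ (α / (2 * (1 - α))) - 1) := by
  obtain ⟨hα0, hα2⟩ := hα
  have hα1 : α < 1 := by linarith
  set A : ℝ := 1 - (1 - α) / (4 * α) * u with hA
  set B : ℝ := 1 - (1 - α) ^ 2 / (2 * α) * u with hB
  set p : ℝ := 1 / (2 * (1 - α)) with hp
  have hne : (1 - α) ≠ 0 := by intro h; linarith [h]
  have hαne : α ≠ 0 := ne_of_gt hα0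
  have hp0 : 0 < p := by
    rw [hp]
    exact div_pos one_pos (by linarith)
  have hp1 : p ≤ 1 := by
    rw [hp, div_le_one (by linarith)]
    linarith
  have hb0 : (0:ℝ) ≤ max B 0 := le_max_right _ _
  -- key: (max B 0) ^ p ≤ max A 0
  have hkey : (max B 0) ^ p ≤ max A 0 := by
    rcases le_or_gt B 0 with hBle | hBpos
    · rw [max_eq_right hBle, Real.zero_rpow (ne_of_gt hp0)]
      exact le_max_right _ _
    · rw [max_eq_left hBpos.le]
      have hs : -1 ≤ B - 1 := by linarith
      have := rpow_one_add_le_one_add_mul_self hs hp0.le hp1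
      have hBA : 1 + p * (B - 1) = A := by
        rw [hA, hB, hp]
        field_simp
        ring
      calc B ^ p = (1 + (B - 1)) ^ p := by ring_nf
        _ ≤ 1 + p * (B - 1) := this
        _ = A := hBA
        _ ≤ max A 0 := le_max_left _ _
  have hpow : (max B 0) ^ (α / (2 * (1 - α))) ≤ (max A 0) ^ α := by
    have h1 : (max B 0) ^ (α / (2 * (1 - α))) = ((max B 0) ^ p) ^ α := by
      rw [← Real.rpow_mul hb0]
      congr 1
      rw [hp]
      field_simp
    rw [h1]
    exact Real.rpow_le_rpow (Real.rpow_nonneg hb0 p) hkey hα0.le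
  have hneg : 1 / (α * (α - 1)) < 0 := by
    apply div_neg_of_pos_of_neg one_pos
    apply mul_neg_of_pos_of_neg hα0
    linarith
  apply mul_le_mul_of_nonpos_left _ hneg.le
  linarith
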